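/- For every real number h with 0 < h < 1, h(h+1) · 2^{2h-1} · (Γ(h))² / Γ(2h) = Σ_{n=0}^∞ (1-h)_n · (2h)_n · (3n + 3h + 1) / ((-8)^n · (h/2 + 1)_n · (h/2 + 3/2)_n), where the series converges absolutely. -/

import Mathlib

open Real

/-- Rising factorial (Pochhammer symbol): `(a)_n = ∏_{i=0}^{n-1} (a + i)`. -/
noncomputable def risingFactorial (a : ℝ) (n : ℕ) : ℝ := ∏ i ∈ Finset.range n, (a + i)

open Set MeasureTheory

-- §1
lemma Gamma_add_nat {a : ℝ} (ha : 0 < a) (n : ℕ) :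
    Real.Gamma (a + n) = risingFactorial a n * Real.Gamma a := by
  induction n with
  | zero => simp [risingFactorial]
  | succ n ih =>
    have hne : a + n ≠ 0 := by positivity
    have : a + ((n:ℝ) + 1) = (a + n) + 1 := by ring
    rw [Nat.cast_add, Nat.cast_one, this, Real.Gamma_add_one hne, ih]
    show _ = (∏ i ∈ Finset.range (n+1), (a + i)) * _
    rw [Finset.prod_range_succ, ← risingFactorial]
    ring

lemma rf_eq {a : ℝ} (ha : 0 < a) (n : ℕ) :
    risingFactorial a n = Real.Gamma (a + n) / Real.Gamma a := by
  rw [Gamma_add_nat ha n, mul_div_assoc, div_self (Real.Gamma_pos_of_pos ha).ne', mul_one]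

-- §2 real beta
lemma ae_Ioc_of_Ioo {E : Type*} {f g : ℝ → E} (hfg : ∀ x ∈ Ioo (0:ℝ) 1, f x = g x) :
    f =ᵐ[volume.restrict (Ioc 0 1)] g := by
  rw [Filter.EventuallyEq, MeasureTheory.ae_restrict_iff' measurableSet_Ioc]
  have h1 : ∀ᵐ (x : ℝ), x ≠ 1 := by
    refine MeasureTheory.compl_mem_ae_iff.mpr ?_
    exact measure_singleton (1:ℝ)
  filter_upwards [h1] with x hx hmem
  exact hfg x ⟨hmem.1, lt_of_le_of_ne hmem.2 hx⟩

lemma ae_Icc_of_Ioo {E : Type*} {f g : ℝ → E} (hfg : ∀ x ∈ Ioo (0:ℝ) 1, f x = g x) :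
    f =ᵐ[volume.restrict (Icc 0 1)] g := by
  rw [Filter.EventuallyEq, MeasureTheory.ae_restrict_iff' measurableSet_Icc]
  have h1 : ∀ᵐ (x : ℝ), x ≠ 1 ∧ x ≠ 0 := by
    refine Filter.Eventually.and ?_ ?_ <;>
    · refine MeasureTheory.compl_mem_ae_iff.mpr ?_
      exact measure_singleton _
  filter_upwards [h1] with x hx hmem
  exact hfg x ⟨lt_of_le_of_ne hmem.1 (Ne.symm hx.2), lt_of_le_of_ne hmem.2 hx.1⟩

noncomputable def rB (a b : ℝ) : ℝ := ∫ x in Ioo (0:ℝ) 1, x ^ (a-1) * (1-x) ^ (b-1)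

lemma betaCongr {a b : ℝ} : ∀ x ∈ Ioo (0:ℝ) 1,
    ((x ^ (a-1) * (1-x) ^ (b-1) : ℝ) : ℂ) = (x:ℂ) ^ ((a:ℂ)-1) * (1-(x:ℂ)) ^ ((b:ℂ)-1) := by
  intro x hx
  rw [Complex.ofReal_mul, Complex.ofReal_cpow hx.1.le,
    Complex.ofReal_cpow (by linarith [hx.2] : (0:ℝ) ≤ 1 - x)]
  push_cast
  ring_nf

lemma betaIntegrand_integrableOn {a b : ℝ} (ha : 0 < a) (hb : 0 < b) :
    IntegrableOn (fun x : ℝ => x ^ (a-1) * (1-x) ^ (b-1)) (Ioo 0 1) := by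
  have hc : IntervalIntegrable (fun x : ℝ => (x:ℂ) ^ ((a:ℂ)-1) * (1-(x:ℂ)) ^ ((b:ℂ)-1))
      volume 0 1 := Complex.betaIntegral_convergent (by simpa) (by simpa)
  rw [intervalIntegrable_iff_integrableOn_Ioc_of_le zero_le_one] at hc
  have hc2 : IntegrableOn (fun x : ℝ => (x:ℂ) ^ ((a:ℂ)-1) * (1-(x:ℂ)) ^ ((b:ℂ)-1)) (Ioo 0 1) :=
    hc.mono_set Ioo_subset_Ioc_self
  have hc3 : IntegrableOn (fun x : ℝ => ((x ^ (a-1) * (1-x) ^ (b-1) : ℝ) : ℂ)) (Ioo 0 1) := by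
    refine hc2.congr ?_
    refine (MeasureTheory.ae_restrict_iff' measurableSet_Ioo).mpr (Filter.Eventually.of_forall ?_)
    intro x hx
    exact (betaCongr x hx).symm
  have := hc3.re
  refine this.congr (Filter.Eventually.of_forall fun x => ?_)
  simp

lemma rB_eq {a b : ℝ} (ha : 0 < a) (hb : 0 < b) :
    rB a b = Real.Gamma a * Real.Gamma b / Real.Gamma (a + b) := by
  have key := Complex.Gamma_mul_Gamma_eq_betaIntegral
    (s := (a:ℂ)) (t := (b:ℂ)) (by simpa) (by simpa)
  have hBeta : Complex.betaIntegral a b = ((rB a b : ℝ) : ℂ) := by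
    rw [Complex.betaIntegral, intervalIntegral.integral_of_le zero_le_one,
      MeasureTheory.integral_Ioc_eq_integral_Ioo]
    rw [show (∫ x in Ioo (0:ℝ) 1, (x:ℂ) ^ ((a:ℂ)-1) * (1-(x:ℂ)) ^ ((b:ℂ)-1)) =
        ∫ x in Ioo (0:ℝ) 1, ((x ^ (a-1) * (1-x) ^ (b-1) : ℝ) : ℂ) from
      MeasureTheory.setIntegral_congr_fun measurableSet_Ioo fun x hx => (betaCongr x hx).symm]
    exact integral_ofReal
  rw [hBeta, ← Complex.ofReal_add, Complex.Gamma_ofReal, Complex.Gamma_ofReal,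
    Complex.Gamma_ofReal, ← Complex.ofReal_mul, ← Complex.ofReal_mul] at key
  have key2 : Real.Gamma a * Real.Gamma b = Real.Gamma (a+b) * rB a b :=
    Complex.ofReal_inj.mp key
  have hne : Real.Gamma (a+b) ≠ 0 := (Real.Gamma_pos_of_pos (by linarith)).ne'
  field_simp [key2]
  linarith [key2]

lemma betaIntervalIntegrable {a b : ℝ} (ha : 0 < a) (hb : 0 < b) :
    IntervalIntegrable (fun x : ℝ => x ^ (a-1) * (1-x) ^ (b-1)) volume 0 1 := by
  rw [intervalIntegrable_iff_integrableOn_Ioc_of_le zero_le_one,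
    integrableOn_Ioc_iff_integrableOn_Ioo]
  exact betaIntegrand_integrableOn ha hb

-- pointwise substitution algebra
lemma subst_pointwise {h : ℝ} (h0 : 0 < h) (h1 : h < 1) {x : ℝ} (hx : x ∈ Ioo (0:ℝ) 1) :
    (4*x/(2-x)^3) * (((x/(2-x))^2) ^ (h-1) * (1 - (x/(2-x))^2) ^ ((1-h)-1))
      = (4:ℝ) ^ (1-h) * (x ^ (2*h-1) * (1-x) ^ ((1-h)-1) / (2-x)) := by
  obtain ⟨hx0, hx1⟩ := hx
  have hq : (0:ℝ) < 2 - x := by linarith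
  have hr : (0:ℝ) < 1 - x := by linarith
  have e1 : (((x/(2-x))^2 : ℝ)) ^ (h-1) = x ^ (2*h-2) * (2-x) ^ (2-2*h) := by
    rw [div_pow, div_rpow (by positivity) (by positivity), ← Real.rpow_natCast x 2,
      ← Real.rpow_natCast (2-x) 2, ← Real.rpow_mul hx0.le, ← Real.rpow_mul hq.le,
      div_eq_mul_inv, ← Real.rpow_neg hq.le]
    norm_num
    ring_nf
  have e2 : ((1 - (x/(2-x))^2 : ℝ)) ^ ((1-h)-1) = (4:ℝ) ^ (-h) * (1-x) ^ (-h) * (2-x) ^ (2*h) := by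
    have : (1 - (x/(2-x))^2 : ℝ) = 4 * (1-x) / (2-x)^2 := by
      field_simp
      ring
    rw [this, div_rpow (by positivity) (by positivity), mul_rpow (by norm_num) hr.le,
      ← Real.rpow_natCast (2-x) 2, ← Real.rpow_mul hq.le, div_eq_mul_inv, ← Real.rpow_neg hq.le]
    have he : ((1:ℝ)-h)-1 = -h := by ring
    rw [he]
    ring_nf
  rw [e1, e2]
  have he : ((1:ℝ)-h)-1 = -h := by ring
  rw [he]
  have c4 : (4:ℝ) * (4:ℝ) ^ (-h) = (4:ℝ) ^ (1-h) := by
    nth_rewrite 1 [show (4:ℝ) = (4:ℝ) ^ (1:ℝ) by rw [Real.rpow_one]]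
    rw [← Real.rpow_add (by norm_num)]
    ring_nf
  have cx : x * x ^ (2*h-2) = x ^ (2*h-1) := by
    nth_rewrite 1 [show x = x ^ (1:ℝ) by rw [Real.rpow_one]]
    rw [← Real.rpow_add hx0]
    ring_nf
  have cq : (2-x) ^ (2-2*h) * (2-x) ^ (2*h) = (2-x)^2 := by
    rw [← Real.rpow_add hq, ← Real.rpow_natCast (2-x) 2]
    norm_num
  have hq3 : (2-x)^3 ≠ 0 := by positivity
  rw [div_mul_eq_mul_div, mul_div_assoc', div_eq_div_iff hq3 (by positivity)]
  calc 4*x*(x ^ (2*h-2) * (2-x) ^ (2-2*h) * ((4:ℝ)^(-h) * (1-x)^(-h) * (2-x)^(2*h))) * (2-x)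
      = (4 * (4:ℝ)^(-h)) * (x * x^(2*h-2)) * (1-x)^(-h) * ((2-x) ^ (2-2*h) * (2-x)^(2*h) * (2-x)) := by ring
    _ = (4:ℝ)^(1-h) * x^(2*h-1) * (1-x)^(-h) * ((2-x)^2 * (2-x)) := by rw [c4, cx, cq]
    _ = (4:ℝ) ^ (1-h) * (x ^ (2*h-1) * (1-x) ^ (-h)) * (2-x)^3 := by ring

lemma image_subset_Ioo {f : ℝ → ℝ} (hf : ∀ x ∈ Ioo (0:ℝ) 1, f x ∈ Ioo (0:ℝ) 1) :
    f '' Ioo 0 1 ⊆ Ioo 0 1 := by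
  rintro _ ⟨x, hx, rfl⟩; exact hf x hx

lemma J_eq {h : ℝ} (h0 : 0 < h) (h1 : h < 1) :
    ∫ x in Ioo (0:ℝ) 1, x ^ (2*h-1) * (1-x) ^ ((1-h)-1) / (2-x)
      = (4:ℝ) ^ (h-1) * rB h (1-h) := by
  have h1h : (0:ℝ) < 1 - h := by linarith
  set f : ℝ → ℝ := fun x => (x/(2-x))^2 with hfdef
  set f' : ℝ → ℝ := fun x => 4*x/(2-x)^3 with hf'def
  set g : ℝ → ℝ := fun u => u ^ (h-1) * (1-u) ^ ((1-h)-1) with hgdef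
  have hq : ∀ x : ℝ, x ∈ Icc (0:ℝ) 1 → (2 - x) ≠ 0 := fun x hx => by
    have := hx.2; intro hc; linarith [hx.1]
  have hfc : ContinuousOn f (uIcc (0:ℝ) 1) := by
    rw [uIcc_of_le zero_le_one]
    exact ((continuousOn_id.div (by fun_prop) hq).pow 2)
  have hmap : ∀ x ∈ Ioo (0:ℝ) 1, f x ∈ Ioo (0:ℝ) 1 := by
    intro x hx
    have h2 : (0:ℝ) < 2 - x := by linarith [hx.2]
    have ht0 : 0 < x/(2-x) := div_pos hx.1 h2
    have ht1 : x/(2-x) < 1 := (div_lt_one h2).mpr (by linarith [hx.2])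
    exact ⟨by positivity, by show (x/(2-x))^2 < 1; exact pow_lt_one₀ ht0.le ht1 two_ne_zero⟩
  have hmapIcc : ∀ x ∈ Icc (0:ℝ) 1, f x ∈ Icc (0:ℝ) 1 := by
    intro x hx
    have h2 : (0:ℝ) < 2 - x := by linarith [hx.2]
    have ht0 : 0 ≤ x/(2-x) := div_nonneg hx.1 h2.le
    have ht1 : x/(2-x) ≤ 1 := (div_le_one h2).mpr (by linarith [hx.2])
    exact ⟨by positivity, by show (x/(2-x))^2 ≤ 1; exact pow_le_one₀ ht0 ht1⟩
  have hderiv : ∀ x ∈ Ioo (min (0:ℝ) 1) (max (0:ℝ) 1),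
      HasDerivWithinAt f (f' x) (Ioi x) x := by
    rw [min_eq_left zero_le_one, max_eq_right zero_le_one]
    intro x hx
    have h2 : (0:ℝ) < 2 - x := by linarith [hx.2]
    have hd : HasDerivAt (fun y : ℝ => y/(2-y)) ((1*(2-x) - x*(-1))/(2-x)^2) x := by
      exact (hasDerivAt_id x).div ((hasDerivAt_id x).const_sub 2) h2.ne'
    have hd2 := (hd.pow 2).hasDerivWithinAt (s := Ioi x)
    show HasDerivWithinAt (fun y : ℝ => (y/(2-y))^2) (4*x/(2-x)^3) (Ioi x) x
    convert hd2 using 1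
    · rfl
    · rfl
    · rfl
    have h2' : (2:ℝ) - x ≠ 0 := h2.ne'
    simp only [Nat.cast_ofNat, show (2:ℕ) - 1 = 1 from rfl, pow_one]
    field_simp
    ring
  have hgcont : ContinuousOn g (f '' Ioo (min (0:ℝ) 1) (max (0:ℝ) 1)) := by
    rw [min_eq_left zero_le_one, max_eq_right zero_le_one]
    refine ContinuousOn.mono ?_ (image_subset_Ioo hmap)
    refine ContinuousOn.mul ?_ ?_
    · exact ContinuousOn.rpow_const continuousOn_id fun x hx => Or.inl hx.1.ne'
    · exact ContinuousOn.rpow_const (by fun_prop) fun x hx => Or.inl (sub_ne_zero.mpr hx.2.ne')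
  have hint : IntegrableOn g (Icc (0:ℝ) 1) := by
    rw [integrableOn_Icc_iff_integrableOn_Ioo]
    have := betaIntegrand_integrableOn h0 h1h
    simpa [hgdef] using this
  have hg1 : IntegrableOn g (f '' uIcc (0:ℝ) 1) := by
    refine hint.mono_set ?_
    rw [uIcc_of_le zero_le_one]
    rintro _ ⟨x, hx, rfl⟩; exact hmapIcc x hx
  have hFint : IntegrableOn (fun x : ℝ => (4:ℝ)^(1-h) * (x ^ (2*h-1) * (1-x) ^ ((1-h)-1) / (2-x)))
      (Icc (0:ℝ) 1) := by
    rw [integrableOn_Icc_iff_integrableOn_Ioo]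
    have hb : IntegrableOn (fun x : ℝ => x ^ (2*h-1) * (1-x) ^ ((1-h)-1)) (Ioo (0:ℝ) 1) := by
      have := betaIntegrand_integrableOn (by linarith : (0:ℝ) < 2*h) h1h
      simpa [show 2*h-1 = 2*h-1 by rfl] using this
    have hcont : ContinuousOn (fun x : ℝ => (4:ℝ)^(1-h) / (2-x)) (Icc (0:ℝ) 1) :=
      ContinuousOn.div continuousOn_const (by fun_prop) hq
    have := hb.mul_continuousOn_of_subset hcont measurableSet_Ioo isCompact_Icc
      Ioo_subset_Icc_self
    refine this.congr_fun (fun x hx => ?_) measurableSet_Ioo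
    ring
  have hg2 : IntegrableOn (fun x => f' x • (g ∘ f) x) (uIcc (0:ℝ) 1) := by
    rw [uIcc_of_le zero_le_one]
    refine hFint.congr ?_
    refine (ae_Icc_of_Ioo (fun x hx => ?_)).symm
    simp only [Function.comp, smul_eq_mul, hfdef, hf'def, hgdef]
    rw [← subst_pointwise h0 h1 hx]
  have key := intervalIntegral.integral_comp_smul_deriv''' (a := (0:ℝ)) (b := 1)
    hfc hderiv hgcont hg1 hg2
  have hf0 : f 0 = 0 := by simp [hfdef]
  have hf1 : f 1 = 1 := by norm_num [hfdef]
  rw [hf0, hf1] at key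
  -- RHS of key is rB h (1-h)
  have hrhs : (∫ u in (0:ℝ)..1, g u) = rB h (1-h) := by
    rw [intervalIntegral.integral_of_le zero_le_one, MeasureTheory.integral_Ioc_eq_integral_Ioo]
    rfl
  -- LHS of key
  have hlhs : (∫ x in (0:ℝ)..1, f' x • (g ∘ f) x)
      = (4:ℝ)^(1-h) * ∫ x in Ioo (0:ℝ) 1, x ^ (2*h-1) * (1-x) ^ ((1-h)-1) / (2-x) := by
    rw [intervalIntegral.integral_of_le zero_le_one, MeasureTheory.integral_Ioc_eq_integral_Ioo]
    rw [show (∫ x in Ioo (0:ℝ) 1, f' x • (g ∘ f) x)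
        = ∫ x in Ioo (0:ℝ) 1, (4:ℝ)^(1-h) * (x ^ (2*h-1) * (1-x) ^ ((1-h)-1) / (2-x)) from
      MeasureTheory.setIntegral_congr_fun measurableSet_Ioo (fun x hx => by
        simp only [Function.comp, smul_eq_mul, hfdef, hf'def, hgdef]
        rw [← subst_pointwise h0 h1 hx])]
    exact MeasureTheory.integral_const_mul _ _
  rw [hlhs, hrhs] at key
  have h4 : ((4:ℝ)^(1-h))⁻¹ = (4:ℝ)^(h-1) := by
    rw [← Real.rpow_neg (by norm_num)]
    ring_nf
  have h4ne : ((4:ℝ)^(1-h)) ≠ 0 := (Real.rpow_pos_of_pos (by norm_num) _).ne'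
  field_simp at key ⊢
  rw [← key, ← h4]
  field_simp

lemma rpow_neg_two : (2:ℝ)^(-2:ℝ) = 1/4 := by
  rw [show (-2:ℝ) = ((-2:ℤ):ℝ) by norm_num, Real.rpow_intCast]
  norm_num

lemma denom_pair {h : ℝ} (h0 : 0 < h) (n : ℕ) :
    risingFactorial (h/2+1) n * risingFactorial (h/2+3/2) n
      = Real.Gamma (h+2+2*n) / Real.Gamma (h+2) * ((1/4:ℝ))^n := by
  rw [rf_eq (by linarith : (0:ℝ) < h/2+1) n, rf_eq (by linarith : (0:ℝ) < h/2+3/2) n,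
    div_mul_div_comm]
  rw [show h/2+3/2+(n:ℝ) = (h/2+1+(n:ℝ))+1/2 by ring, Real.Gamma_mul_Gamma_add_half,
    show 2*(h/2+1+(n:ℝ)) = h+2+2*(n:ℝ) by ring]
  rw [show h/2+3/2 = (h/2+1)+1/2 by ring, Real.Gamma_mul_Gamma_add_half,
    show 2*(h/2+1) = h+2 by ring]
  have p1 : (2:ℝ)^(1-(h+2+2*(n:ℝ))) = 2^(1-(h+2)) * (1/4:ℝ)^n := by
    rw [show (1-(h+2+2*(n:ℝ))) = (1-(h+2)) + (-2)*(n:ℝ) by ring, Real.rpow_add two_pos,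
      Real.rpow_mul (by norm_num : (0:ℝ) ≤ 2), Real.rpow_natCast, rpow_neg_two]
  rw [p1]
  have hne1 : Real.Gamma (h+2) ≠ 0 := (Real.Gamma_pos_of_pos (by linarith)).ne'
  have hne2 : (2:ℝ)^(1-(h+2)) ≠ 0 := (Real.rpow_pos_of_pos two_pos _).ne'
  have hne3 : Real.sqrt π ≠ 0 := by positivity
  field_simp

lemma term_eq {h : ℝ} (h0 : 0 < h) (h1 : h < 1) (n : ℕ) :
    risingFactorial (1-h) n * risingFactorial (2*h) n * (3*(n:ℝ)+3*h+1) /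
      ((-8:ℝ)^n * risingFactorial (h/2+1) n * risingFactorial (h/2+3/2) n)
    = (Real.Gamma (h+2) / (Real.Gamma (2*h) * Real.Gamma (1-h))) *
      (((-1:ℝ)/2)^n * (Real.Gamma (2*h+n) * Real.Gamma (1-h+n) * (3*(n:ℝ)+3*h+1) /
        Real.Gamma (h+2+2*n))) := by
  rw [mul_assoc ((-8:ℝ)^n), denom_pair h0 n,
    rf_eq (by linarith : (0:ℝ) < 1-h) n, rf_eq (by linarith : (0:ℝ) < 2*h) n]
  have g1 : Real.Gamma (1-h) ≠ 0 := (Real.Gamma_pos_of_pos (by linarith)).ne'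
  have g2 : Real.Gamma (2*h) ≠ 0 := (Real.Gamma_pos_of_pos (by linarith)).ne'
  have g3 : Real.Gamma (h+2) ≠ 0 := (Real.Gamma_pos_of_pos (by linarith)).ne'
  have g4 : Real.Gamma (h+2+2*n) ≠ 0 :=
    (Real.Gamma_pos_of_pos (by positivity : (0:ℝ) < h+2+2*(n:ℕ))).ne'
  have p8 : ((-8:ℝ))^n ≠ 0 := pow_ne_zero _ (by norm_num)
  have p4 : ((4:ℝ))^n ≠ 0 := pow_ne_zero _ (by norm_num)
  have pm : ((-1:ℝ)/2)^n = 4^n / (-8:ℝ)^n := by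
    rw [← div_pow]
    norm_num
  rw [pm]
  have p14 : ((1:ℝ)/4)^n = 1/(4:ℝ)^n := by rw [← one_div_pow]
  rw [p14]
  field_simp

noncomputable def phi (h : ℝ) (n : ℕ) : ℝ → ℝ := fun x => ((-1:ℝ)/2)^n *
  (x ^ (2*h+(n:ℝ)-1) * (1-x) ^ (1-h+(n:ℝ)-1) + x ^ (2*h+1+(n:ℝ)-1) * (1-x) ^ (1-h+(n:ℝ)-1))

lemma beta_val {a b : ℝ} (ha : 0 < a) (hb : 0 < b) :
    ∫ x in Ioo (0:ℝ) 1, x ^ (a-1) * (1-x) ^ (b-1)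
      = Real.Gamma a * Real.Gamma b / Real.Gamma (a+b) := rB_eq ha hb

lemma phi_integrableOn {h : ℝ} (h0 : 0 < h) (h1 : h < 1) (n : ℕ) :
    IntegrableOn (phi h n) (Ioo 0 1) := by
  have b1 := betaIntegrand_integrableOn (a := 2*h+(n:ℝ)) (b := 1-h+(n:ℝ))
    (by positivity) (by have : (0:ℝ) ≤ (n:ℝ) := Nat.cast_nonneg n; linarith) 
  have b2 := betaIntegrand_integrableOn (a := 2*h+1+(n:ℝ)) (b := 1-h+(n:ℝ))
    (by positivity) (by have : (0:ℝ) ≤ (n:ℝ) := Nat.cast_nonneg n; linarith)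
  exact (b1.add b2).const_mul _

lemma phi_split {h : ℝ} (h0 : 0 < h) (h1 : h < 1) (n : ℕ) {x : ℝ} (hx : x ∈ Ioo (0:ℝ) 1) :
    phi h n x = (x ^ (2*h-1) * (1-x) ^ (1-h-1) * (1+x)) * (-(x*(1-x))/2)^n := by
  obtain ⟨hx0, hx1⟩ := hx
  have hr : (0:ℝ) < 1 - x := by linarith
  have ha : x ^ (2*h+(n:ℝ)-1) = x ^ (2*h-1) * x^n := by
    rw [show 2*h+(n:ℝ)-1 = (2*h-1)+(n:ℝ) by ring, Real.rpow_add hx0, Real.rpow_natCast]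
  have hb : x ^ (2*h+1+(n:ℝ)-1) = x ^ (2*h-1) * x^n * x := by
    rw [show 2*h+1+(n:ℝ)-1 = ((2*h-1)+(n:ℝ))+1 by ring, Real.rpow_add hx0, Real.rpow_add hx0,
      Real.rpow_one, Real.rpow_natCast]
  have hc : (1-x) ^ (1-h+(n:ℝ)-1) = (1-x) ^ (1-h-1) * (1-x)^n := by
    rw [show 1-h+(n:ℝ)-1 = (1-h-1)+(n:ℝ) by ring, Real.rpow_add hr, Real.rpow_natCast]
  rw [phi, ha, hb, hc, show (-(x*(1-x))/2) = ((-1:ℝ)/2) * (x*(1-x)) by ring, mul_pow, mul_pow]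
  ring

lemma phi_norm_bound {h : ℝ} (h0 : 0 < h) (h1 : h < 1) (n : ℕ) {x : ℝ}
    (hx : x ∈ Ioo (0:ℝ) 1) :
    ‖phi h n x‖ ≤ ((1/8:ℝ)^n * 2) * (x ^ (2*h-1) * (1-x) ^ (1-h-1)) := by
  obtain ⟨hx0, hx1⟩ := hx
  have hr : (0:ℝ) < 1 - x := by linarith
  have hw : (0:ℝ) ≤ x ^ (2*h-1) * (1-x) ^ (1-h-1) := by positivity
  rw [phi_split h0 h1 n ⟨hx0, hx1⟩, Real.norm_eq_abs, abs_mul, abs_pow]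
  have e1 : |(-(x*(1-x))/2)| = x*(1-x)/2 := by
    rw [abs_of_nonpos (by nlinarith)]
    ring
  have e2 : x*(1-x)/2 ≤ 1/8 := by nlinarith [sq_nonneg (x - 1/2)]
  have e3 : |x ^ (2*h-1) * (1-x) ^ (1-h-1) * (1+x)| ≤ x ^ (2*h-1) * (1-x) ^ (1-h-1) * 2 := by
    rw [abs_of_nonneg (by positivity)]
    nlinarith
  calc |x ^ (2*h-1) * (1-x) ^ (1-h-1) * (1+x)| * |(-(x*(1-x))/2)|^n
      ≤ (x ^ (2*h-1) * (1-x) ^ (1-h-1) * 2) * (1/8:ℝ)^n := by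
        refine mul_le_mul e3 ?_ (by positivity) (by positivity)
        rw [e1]
        exact pow_le_pow_left₀ (by positivity) e2 n
    _ = ((1/8:ℝ)^n * 2) * (x ^ (2*h-1) * (1-x) ^ (1-h-1)) := by ring

lemma phi_norm_summable {h : ℝ} (h0 : 0 < h) (h1 : h < 1) :
    Summable (fun n => ∫ x in Ioo (0:ℝ) 1, ‖phi h n x‖) := by
  have hK := betaIntegrand_integrableOn (a := 2*h) (b := 1-h)
    (by linarith) (by linarith)
  set K : ℝ := ∫ x in Ioo (0:ℝ) 1, x ^ (2*h-1) * (1-x) ^ (1-h-1) with hKdef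
  have hle : ∀ n : ℕ, (∫ x in Ioo (0:ℝ) 1, ‖phi h n x‖) ≤ ((1/8:ℝ)^n * 2) * K := by
    intro n
    have : (∫ x in Ioo (0:ℝ) 1, ‖phi h n x‖)
        ≤ ∫ x in Ioo (0:ℝ) 1, ((1/8:ℝ)^n * 2) * (x ^ (2*h-1) * (1-x) ^ (1-h-1)) := by
      refine MeasureTheory.setIntegral_mono_on ((phi_integrableOn h0 h1 n).norm) ?_
        measurableSet_Ioo (fun x hx => phi_norm_bound h0 h1 n hx)
      exact hK.const_mul _
    rw [MeasureTheory.integral_const_mul] at this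
    exact this
  refine Summable.of_nonneg_of_le (fun n => ?_) hle ?_
  · exact MeasureTheory.integral_nonneg (fun x => norm_nonneg _)
  · have : Summable (fun n : ℕ => ((1/8:ℝ)^n * 2) * K) := by
      exact ((summable_geometric_of_lt_one (by norm_num) (by norm_num)).mul_right 2).mul_right K
    exact this

lemma phi_tsum_pointwise {h : ℝ} (h0 : 0 < h) (h1 : h < 1) {x : ℝ} (hx : x ∈ Ioo (0:ℝ) 1) :
    ∑' n : ℕ, phi h n x = 2 * (x ^ (2*h-1) * (1-x) ^ (1-h-1) / (2-x)) := by
  obtain ⟨hx0, hx1⟩ := hx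
  have hr : (0:ℝ) < 1 - x := by linarith
  have h2x : (0:ℝ) < 2 - x := by linarith
  have hnorm : ‖-(x*(1-x))/2‖ < 1 := by
    rw [Real.norm_eq_abs, abs_of_nonpos (by nlinarith)]
    nlinarith
  calc ∑' n : ℕ, phi h n x
      = ∑' n : ℕ, (x ^ (2*h-1) * (1-x) ^ (1-h-1) * (1+x)) * (-(x*(1-x))/2)^n :=
        tsum_congr (fun n => phi_split h0 h1 n ⟨hx0, hx1⟩)
    _ = (x ^ (2*h-1) * (1-x) ^ (1-h-1) * (1+x)) * (1 - (-(x*(1-x))/2))⁻¹ := by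
        rw [tsum_mul_left, tsum_geometric_of_norm_lt_one hnorm]
    _ = 2 * (x ^ (2*h-1) * (1-x) ^ (1-h-1) / (2-x)) := by
        have hd : (1 - (-(x*(1-x))/2)) = (2-x)*(1+x)/2 := by ring
        rw [hd]
        have h1x : (0:ℝ) < 1 + x := by linarith
        field_simp

lemma sum_integral {h : ℝ} (h0 : 0 < h) (h1 : h < 1) :
    ∑' n : ℕ, ∫ x in Ioo (0:ℝ) 1, phi h n x
      = 2 * ((4:ℝ)^(h-1) * rB h (1-h)) := by
  rw [MeasureTheory.integral_tsum_of_summable_integral_norm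
    (fun n => phi_integrableOn h0 h1 n) (phi_norm_summable h0 h1)]
  rw [MeasureTheory.setIntegral_congr_fun measurableSet_Ioo
    (fun x hx => phi_tsum_pointwise h0 h1 hx)]
  rw [MeasureTheory.integral_const_mul]
  have := J_eq h0 h1
  rw [show ((1:ℝ)-h)-1 = 1-h-1 by ring] at this
  rw [this]

lemma bracket {h : ℝ} (h0 : 0 < h) (h1 : h < 1) (n : ℕ) :
    Real.Gamma (2*h+n) * Real.Gamma (1-h+n) / Real.Gamma (h+1+2*n)
      + Real.Gamma (2*h+1+n) * Real.Gamma (1-h+n) / Real.Gamma (h+2+2*n)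
    = Real.Gamma (2*h+n) * Real.Gamma (1-h+n) * (3*(n:ℝ)+3*h+1) / Real.Gamma (h+2+2*n) := by
  have hn : (0:ℝ) ≤ (n:ℝ) := Nat.cast_nonneg n
  have e2 : Real.Gamma (h+2+2*(n:ℝ)) = (h+1+2*(n:ℝ)) * Real.Gamma (h+1+2*(n:ℝ)) := by
    rw [show h+2+2*(n:ℝ) = (h+1+2*(n:ℝ))+1 by ring,
      Real.Gamma_add_one (by positivity : (h+1+2*(n:ℝ)) ≠ 0)]
  have e3 : Real.Gamma (2*h+1+(n:ℝ)) = (2*h+(n:ℝ)) * Real.Gamma (2*h+(n:ℝ)) := by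
    rw [show 2*h+1+(n:ℝ) = (2*h+(n:ℝ))+1 by ring,
      Real.Gamma_add_one (by positivity : (2*h+(n:ℝ)) ≠ 0)]
  have g1 : Real.Gamma (h+1+2*(n:ℝ)) ≠ 0 := (Real.Gamma_pos_of_pos (by positivity)).ne'
  have g2 : (h+1+2*(n:ℝ)) ≠ 0 := by positivity
  rw [e2, e3]
  field_simp
  ring

lemma phi_integral {h : ℝ} (h0 : 0 < h) (h1 : h < 1) (n : ℕ) :
    ∫ x in Ioo (0:ℝ) 1, phi h n x
      = ((-1:ℝ)/2)^n * (Real.Gamma (2*h+n) * Real.Gamma (1-h+n) * (3*(n:ℝ)+3*h+1) /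
        Real.Gamma (h+2+2*n)) := by
  have hn : (0:ℝ) ≤ (n:ℝ) := Nat.cast_nonneg n
  have b1 := betaIntegrand_integrableOn (a := 2*h+(n:ℝ)) (b := 1-h+(n:ℝ))
    (by positivity) (by linarith)
  have b2 := betaIntegrand_integrableOn (a := 2*h+1+(n:ℝ)) (b := 1-h+(n:ℝ))
    (by positivity) (by linarith)
  rw [show phi h n = fun x => ((-1:ℝ)/2)^n *
      (x ^ (2*h+(n:ℝ)-1) * (1-x) ^ (1-h+(n:ℝ)-1)
        + x ^ (2*h+1+(n:ℝ)-1) * (1-x) ^ (1-h+(n:ℝ)-1)) from rfl]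
  rw [MeasureTheory.integral_const_mul, MeasureTheory.integral_add b1 b2]
  rw [beta_val (by positivity : (0:ℝ) < 2*h+(n:ℝ)) (by linarith : (0:ℝ) < 1-h+(n:ℝ)),
    beta_val (by positivity : (0:ℝ) < 2*h+1+(n:ℝ)) (by linarith : (0:ℝ) < 1-h+(n:ℝ))]
  rw [show 2*h+(n:ℝ)+(1-h+(n:ℝ)) = h+1+2*(n:ℝ) by ring,
    show 2*h+1+(n:ℝ)+(1-h+(n:ℝ)) = h+2+2*(n:ℝ) by ring]
  rw [bracket h0 h1 n]

theorem stmt13 (h : ℝ) (h0 : 0 < h) (h1 : h < 1) :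
    Summable (fun n : ℕ =>
      |risingFactorial (1 - h) n * risingFactorial (2 * h) n * (3 * (n : ℝ) + 3 * h + 1) /
        ((-8 : ℝ) ^ n * risingFactorial (h / 2 + 1) n * risingFactorial (h / 2 + 3 / 2) n)|) ∧
    h * (h + 1) * (2 : ℝ) ^ (2 * h - 1) * (Real.Gamma h) ^ 2 / Real.Gamma (2 * h) =
      ∑' n : ℕ,
        risingFactorial (1 - h) n * risingFactorial (2 * h) n * (3 * (n : ℝ) + 3 * h + 1) /
          ((-8 : ℝ) ^ n * risingFactorial (h / 2 + 1) n * risingFactorial (h / 2 + 3 / 2) n) := by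
  have gh : (0:ℝ) < Real.Gamma h := Real.Gamma_pos_of_pos h0
  have g1h : (0:ℝ) < Real.Gamma (1-h) := Real.Gamma_pos_of_pos (by linarith)
  have g2h : (0:ℝ) < Real.Gamma (2*h) := Real.Gamma_pos_of_pos (by linarith)
  have gh2 : (0:ℝ) < Real.Gamma (h+2) := Real.Gamma_pos_of_pos (by linarith)
  set C : ℝ := Real.Gamma (h+2) / (Real.Gamma (2*h) * Real.Gamma (1-h)) with hC
  have hCpos : 0 < C := by positivity
  have hterm : ∀ n : ℕ,
      risingFactorial (1 - h) n * risingFactorial (2 * h) n * (3 * (n : ℝ) + 3 * h + 1) /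
        ((-8 : ℝ) ^ n * risingFactorial (h / 2 + 1) n * risingFactorial (h / 2 + 3 / 2) n)
      = C * ∫ x in Ioo (0:ℝ) 1, phi h n x := by
    intro n
    rw [phi_integral h0 h1 n]
    exact term_eq h0 h1 n
  constructor
  · -- summability
    have hbound : ∀ n : ℕ,
        |risingFactorial (1 - h) n * risingFactorial (2 * h) n * (3 * (n : ℝ) + 3 * h + 1) /
          ((-8 : ℝ) ^ n * risingFactorial (h / 2 + 1) n * risingFactorial (h / 2 + 3 / 2) n)|
        ≤ C * ∫ x in Ioo (0:ℝ) 1, ‖phi h n x‖ := by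
      intro n
      rw [hterm n, abs_mul, abs_of_pos hCpos]
      have := MeasureTheory.norm_integral_le_integral_norm (μ := volume.restrict (Ioo 0 1))
        (f := phi h n)
      rw [Real.norm_eq_abs] at this
      exact mul_le_mul_of_nonneg_left this hCpos.le
    refine Summable.of_nonneg_of_le (fun n => abs_nonneg _) hbound ?_
    exact (phi_norm_summable h0 h1).mul_left C
  · -- the value
    rw [show (fun n : ℕ =>
        risingFactorial (1 - h) n * risingFactorial (2 * h) n * (3 * (n : ℝ) + 3 * h + 1) /
          ((-8 : ℝ) ^ n * risingFactorial (h / 2 + 1) n * risingFactorial (h / 2 + 3 / 2) n))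
        = (fun n : ℕ => C * ∫ x in Ioo (0:ℝ) 1, phi h n x) from funext hterm]
    rw [tsum_mul_left, sum_integral h0 h1]
    rw [rB_eq h0 (by linarith : (0:ℝ) < 1-h), show h + (1-h) = 1 by ring, Real.Gamma_one]
    have h4 : (4:ℝ)^(h-1) = (2:ℝ)^(2*h-2) := by
      rw [show (2*h-2 : ℝ) = 2*(h-1) by ring, Real.rpow_mul (by norm_num : (0:ℝ) ≤ 2),
        show ((2:ℝ)^(2:ℝ)) = 4 by
          rw [show (2:ℝ) = ((2:ℕ):ℝ) by norm_num]
          rw [Real.rpow_natCast]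
          norm_num]
    have h22 : (2:ℝ) * (2:ℝ)^(2*h-2) = (2:ℝ)^(2*h-1) := by
      rw [show (2*h-1 : ℝ) = 1 + (2*h-2) by ring, Real.rpow_add two_pos, Real.rpow_one]
    have hG2 : Real.Gamma (h+2) = (h+1) * h * Real.Gamma h := by
      rw [show h+2 = (h+1)+1 by ring, Real.Gamma_add_one (by linarith),
        Real.Gamma_add_one h0.ne']
      ring
    rw [hC, hG2, h4]
    rw [div_one, ← h22]
    field_simp
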